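/- arXiv:1304.0044 — 3 statements merged into one kernel-verified Lean document; each statement's English description precedes it below -/
import Mathlib

section
/- Let m be a natural number, let e_0, …, e_m be rational numbers, and let P(t) = ∑_{i=0}^{m} (−1)^i e_i · C(t + m − i, m − i) ∈ ℚ[t]. Let d be an integer and define Q(t) = P(−t + d). Then Q(t) = ∑_{i=0}^{m} (−1)^i h_i · C(t + m − i, m − i), where h_i = (−1)^m · ∑_{k=0}^{i} (−1)^k · C(d + m + 1 − k, i − k) · e_k. -/
open Polynomial Finset

/-- The binomial coefficient polynomial `C(u, n) = u(u−1)⋯(u−n+1)/n!` for `u ∈ ℚ[t]`. -/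
noncomputable def choosePoly (u : Polynomial ℚ) (n : ℕ) : Polynomial ℚ :=
  Polynomial.C ((n.factorial : ℚ)⁻¹) * (descPochhammer ℚ n).comp u

/-- The generalized binomial coefficient `C(a, n) = a(a−1)⋯(a−n+1)/n!` for `a ∈ ℚ`. -/
noncomputable def genChoose (a : ℚ) (n : ℕ) : ℚ :=
  (descPochhammer ℚ n).eval a / n.factorial

lemma smeval_desc (r : ℚ) (k : ℕ) : (descPochhammer ℤ k).smeval r = (descPochhammer ℚ k).eval r := by
  rw [descPochhammer_smeval_eq_ascPochhammer, ascPochhammer_smeval_eq_eval,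
    descPochhammer_eval_eq_ascPochhammer]

lemma genChoose_eq_ringChoose (r : ℚ) (k : ℕ) : genChoose r k = Ring.choose r k := by
  have h := Ring.descPochhammer_eq_factorial_smul_choose (R := ℚ) r k
  rw [smeval_desc, nsmul_eq_mul] at h
  rw [genChoose, h]
  field_simp

lemma genChoose_add (r s : ℚ) (k : ℕ) :
    genChoose (r + s) k = ∑ j ∈ range (k + 1), genChoose r j * genChoose s (k - j) := by
  simp only [genChoose_eq_ringChoose]
  rw [Ring.add_choose_eq k (mul_comm r s), Finset.Nat.sum_antidiagonal_eq_sum_range_succ_mk]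

lemma genChoose_reflect (x : ℚ) (l : ℕ) :
    genChoose (x + l) l = (-1) ^ l * genChoose (-x - 1) l := by
  have h : (descPochhammer ℚ l).eval (x + l) = (-1) ^ l * (descPochhammer ℚ l).eval (-x - 1) := by
    rw [descPochhammer_eval_eq_ascPochhammer]
    have e : x + (l : ℚ) - l + 1 = -(-x - 1) := by ring
    rw [e, ← ascPochhammer_smeval_eq_eval, ascPochhammer_smeval_neg_eq_descPochhammer, smeval_desc]
    rw [Units.smul_def, zsmul_eq_mul, Int.cast_negOnePow_natCast]
  rw [genChoose, genChoose, h, mul_div_assoc]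


lemma neg_one_pow_mod (a b : ℕ) (h : a % 2 = b % 2) : ((-1 : ℚ)) ^ a = (-1) ^ b := by
  rw [neg_one_pow_eq_pow_mod_two (n := a), neg_one_pow_eq_pow_mod_two (n := b), h]

lemma core_id (c x : ℚ) (n : ℕ) :
    ∑ j ∈ range (n + 1),
      (-1) ^ (j + n) * genChoose (c + 1) j * genChoose (x + ((n - j : ℕ) : ℚ)) (n - j)
      = genChoose (c - x) n := by
  have hcx : c - x = (c + 1) + (-x - 1) := by ring
  rw [hcx, genChoose_add]
  refine sum_congr rfl fun j hj => ?_
  have hj' : j ≤ n := Nat.lt_succ_iff.mp (mem_range.mp hj)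
  rw [genChoose_reflect x (n - j)]
  have S : ((-1 : ℚ)) ^ (j + n) * (-1) ^ (n - j) = 1 := by
    rw [← pow_add]
    have : ((-1 : ℚ)) ^ (j + n + (n - j)) = (-1) ^ 0 := neg_one_pow_mod _ _ (by omega)
    simpa using this
  linear_combination (genChoose (c + 1) j * genChoose (-x - 1) (n - j)) * S

lemma choosePoly_eval (u : Polynomial ℚ) (n : ℕ) (x : ℚ) :
    (choosePoly u n).eval x = genChoose (u.eval x) n := by
  simp [choosePoly, genChoose, eval_comp, div_eq_inv_mul]

/-- Lemma 1.7: if `P(t) = ∑_{i=0}^{m} (−1)^i e_i C(t+m−i, m−i)` and `Q(t) = P(−t+d)`, then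
`Q(t) = ∑_{i=0}^{m} (−1)^i h_i C(t+m−i, m−i)` where
`h_i = (−1)^m ∑_{k=0}^{i} (−1)^k C(d+m+1−k, i−k) e_k`. -/
theorem binomial_basis_coeffs_under_reflection (m : ℕ) (e : ℕ → ℚ) (d : ℤ) :
    ((∑ i ∈ Finset.range (m + 1),
        Polynomial.C ((-1) ^ i * e i) * choosePoly (X + Polynomial.C ((m - i : ℕ) : ℚ)) (m - i)).comp
      (-X + Polynomial.C (d : ℚ)))
      = ∑ i ∈ Finset.range (m + 1),
          Polynomial.C ((-1) ^ i *
              ((-1) ^ m * ∑ k ∈ Finset.range (i + 1),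
                (-1) ^ k * genChoose ((d : ℚ) + m + 1 - k) (i - k) * e k)) *
            choosePoly (X + Polynomial.C ((m - i : ℕ) : ℚ)) (m - i) := by
  apply Polynomial.funext
  intro x
  simp only [eval_comp, eval_finset_sum, eval_mul, eval_add, eval_neg, eval_X, eval_C,
    choosePoly_eval]
  have rhs_eq : ∑ i ∈ Finset.range (m + 1),
      (-1) ^ i * ((-1) ^ m * ∑ k ∈ Finset.range (i + 1),
        (-1) ^ k * genChoose ((d : ℚ) + m + 1 - k) (i - k) * e k) *
        genChoose (x + ((m - i : ℕ) : ℚ)) (m - i)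
      = ∑ i ∈ Finset.range (m + 1), ∑ k ∈ Finset.range (i + 1),
          (-1) ^ i * ((-1) ^ m * ((-1) ^ k * genChoose ((d : ℚ) + m + 1 - k) (i - k) * e k)) *
            genChoose (x + ((m - i : ℕ) : ℚ)) (m - i) := by
    refine sum_congr rfl fun i _ => ?_
    simp only [Finset.mul_sum, Finset.sum_mul]
  rw [rhs_eq]
  have swap := Finset.sum_Ico_Ico_comm 0 (m + 1) (fun k i =>
      (-1) ^ i * ((-1) ^ m * ((-1) ^ k * genChoose ((d : ℚ) + m + 1 - k) (i - k) * e k)) *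
        genChoose (x + ((m - i : ℕ) : ℚ)) (m - i))
  simp only [← Nat.Ico_zero_eq_range] at *
  rw [← swap]
  refine sum_congr rfl fun k hk => ?_
  have hkm : k ≤ m := by
    simp only [mem_Ico] at hk; omega
  rw [Finset.sum_Ico_eq_sum_range]
  have hcount : m + 1 - k = (m - k) + 1 := by omega
  rw [hcount]
  set n := m - k with hn
  have key := core_id ((d : ℚ) + m - k) x n
  have hcast : ((n : ℕ) : ℚ) = (m : ℚ) - k := by
    rw [hn]; push_cast [hkm]; ring
  have harg : (-x + (d : ℚ)) + ((m - k : ℕ) : ℚ) = ((d : ℚ) + m - k) - x := by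
    rw [← hn, hcast]; ring
  rw [harg, ← key, Finset.mul_sum]
  refine sum_congr rfl fun j hj => ?_
  have hjn : j ≤ n := Nat.lt_succ_iff.mp (mem_range.mp hj)
  have h1 : m - (k + j) = n - j := by omega
  have h2 : k + j - k = j := by omega
  have h3 : (d : ℚ) + m + 1 - k = ((d : ℚ) + m - k) + 1 := by ring
  rw [h1, h2, h3]
  have S : ((-1 : ℚ)) ^ (k + j) * (-1) ^ m * (-1) ^ k = (-1) ^ k * (-1) ^ (j + n) := by
    rw [← pow_add, ← pow_add, ← pow_add]
    exact neg_one_pow_mod _ _ (by omega)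
  linear_combination (-(genChoose ((d : ℚ) + m - k + 1) j * e k *
    genChoose (x + ((n - j : ℕ) : ℚ)) (n - j))) * S
end

section
/- Let g ≥ 1 and let d_1, …, d_g be positive integers. Let Q(t) = ∏_{j=1}^{g} (∑_{ℓ=0}^{d_j−1} t^ℓ) ∈ ℚ[t] and set e_i = Q^{(i)}(1)/i! for i = 0, 1, 2, 3. Then e_0 ≠ 0 and e_3 = −e_2 + e_1e_2/e_0 − e_1/6 + e_1²/(2e_0) − e_1³/(3e_0²). In particular, the fourth Hilbert coefficient of a global complete intersection is a rational function of the first three. -/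
open Polynomial Finset

private noncomputable def aa (i : ℕ) (P : Polynomial ℚ) : ℚ := (derivative^[i] P).eval 1

private noncomputable def TT (P : Polynomial ℚ) : ℚ :=
  aa 3 P / (6 * aa 0 P) + aa 2 P / (2 * aa 0 P) - aa 1 P * aa 2 P / (2 * (aa 0 P) ^ 2)
    + aa 1 P / (6 * aa 0 P) - (aa 1 P) ^ 2 / (2 * (aa 0 P) ^ 2) + (aa 1 P) ^ 3 / (3 * (aa 0 P) ^ 3)

private lemma aa_mul (P R : Polynomial ℚ) :
    aa 0 (P * R) = aa 0 P * aa 0 R ∧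
    aa 1 (P * R) = aa 1 P * aa 0 R + aa 0 P * aa 1 R ∧
    aa 2 (P * R) = aa 2 P * aa 0 R + 2 * (aa 1 P * aa 1 R) + aa 0 P * aa 2 R ∧
    aa 3 (P * R) = aa 3 P * aa 0 R + 3 * (aa 2 P * aa 1 R) + 3 * (aa 1 P * aa 2 R)
      + aa 0 P * aa 3 R := by
  simp only [aa, Function.iterate_succ_apply', Function.iterate_zero_apply, derivative_mul,
    derivative_add, eval_mul, eval_add]
  exact ⟨trivial, trivial, by ring, by ring⟩

private lemma TT_mul (P R : Polynomial ℚ) (hp : aa 0 P ≠ 0) (hr : aa 0 R ≠ 0) :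
    TT (P * R) = TT P + TT R := by
  obtain ⟨h0, h1, h2, h3⟩ := aa_mul P R
  simp only [TT, h0, h1, h2, h3]
  field_simp
  ring

private lemma aaq (k d : ℕ) :
    (derivative^[k] (∑ ℓ ∈ Finset.range d, X ^ ℓ : Polynomial ℚ)).eval 1
      = ∑ ℓ ∈ Finset.range d, (ℓ.descFactorial k : ℚ) := by
  rw [iterate_derivative_sum, eval_finset_sum]
  refine Finset.sum_congr rfl fun ℓ _ => ?_
  rw [iterate_derivative_X_pow_eq_natCast_mul]
  simp

private lemma sum1 (d : ℕ) :
    ∑ ℓ ∈ Finset.range d, (ℓ.descFactorial 1 : ℚ) = d * (d - 1) / 2 := by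
  induction d with
  | zero => simp
  | succ m ih =>
    rw [Finset.sum_range_succ, ih]
    simp [Nat.descFactorial]
    ring

private lemma sum2 (d : ℕ) :
    ∑ ℓ ∈ Finset.range d, (ℓ.descFactorial 2 : ℚ) = d * (d - 1) * (d - 2) / 3 := by
  induction d with
  | zero => simp
  | succ m ih =>
    rw [Finset.sum_range_succ, ih]
    match m with
    | 0 => norm_num
    | Nat.succ n =>
      simp [Nat.descFactorial]
      ring

private lemma sum3 (d : ℕ) :
    ∑ ℓ ∈ Finset.range d, (ℓ.descFactorial 3 : ℚ) = d * (d - 1) * (d - 2) * (d - 3) / 4 := by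
  induction d with
  | zero => simp
  | succ m ih =>
    rw [Finset.sum_range_succ, ih]
    match m with
    | 0 => norm_num
    | 1 => norm_num [Nat.descFactorial]
    | Nat.succ (Nat.succ n) =>
      simp [Nat.descFactorial]
      ring

private lemma aa0_q (d : ℕ) : aa 0 (∑ ℓ ∈ Finset.range d, X ^ ℓ : Polynomial ℚ) = d := by
  simp [aa]

private lemma TT_q (d : ℕ) (hd : 0 < d) :
    TT (∑ ℓ ∈ Finset.range d, X ^ ℓ : Polynomial ℚ) = 0 := by
  have h0 : (d : ℚ) ≠ 0 := Nat.cast_ne_zero.mpr hd.ne'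
  have e0 := aa0_q d
  have e1 : aa 1 (∑ ℓ ∈ Finset.range d, X ^ ℓ : Polynomial ℚ) = d * (d - 1) / 2 := by
    rw [aa, aaq, sum1]
  have e2 : aa 2 (∑ ℓ ∈ Finset.range d, X ^ ℓ : Polynomial ℚ) = d * (d - 1) * (d - 2) / 3 := by
    rw [aa, aaq, sum2]
  have e3 : aa 3 (∑ ℓ ∈ Finset.range d, X ^ ℓ : Polynomial ℚ)
      = d * (d - 1) * (d - 2) * (d - 3) / 4 := by
    rw [aa, aaq, sum3]
  rw [TT, e0, e1, e2, e3]
  field_simp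
  ring

private lemma TT_prod {g : ℕ} (d : Fin g → ℕ) (hd : ∀ j, 0 < d j) (s : Finset (Fin g)) :
    aa 0 (∏ j ∈ s, ∑ ℓ ∈ Finset.range (d j), X ^ ℓ : Polynomial ℚ) ≠ 0 ∧
    TT (∏ j ∈ s, ∑ ℓ ∈ Finset.range (d j), X ^ ℓ : Polynomial ℚ) = 0 := by
  classical
  induction s using Finset.induction with
  | empty => constructor <;> simp [aa, TT]
  | @insert j s hj ih =>
    rw [Finset.prod_insert hj]
    have hq : aa 0 (∑ ℓ ∈ Finset.range (d j), X ^ ℓ : Polynomial ℚ) ≠ 0 := by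
      rw [aa0_q]; exact Nat.cast_ne_zero.mpr (hd j).ne'
    refine ⟨?_, ?_⟩
    · rw [(aa_mul _ _).1]
      exact mul_ne_zero hq ih.1
    · rw [TT_mul _ _ hq ih.1, TT_q _ (hd j), ih.2]
      ring

/-- Remark 2.6: for `Q(t) = ∏_{j=1}^{g} (1 + t + ⋯ + t^{d_j−1})` and `e_i = Q^{(i)}(1)/i!`,
one has `e_0 ≠ 0` and
`e_3 = −e_2 + e_1e_2/e_0 − e_1/6 + e_1²/(2e_0) − e_1³/(3e_0²)`:
the fourth Hilbert coefficient of a global complete intersection is a rational function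
of the first three. -/
theorem e3_rational_function_of_first_three (g : ℕ) (hg : 1 ≤ g)
    (d : Fin g → ℕ) (hd : ∀ j, 0 < d j) :
    let Q : Polynomial ℚ := ∏ j, ∑ ℓ ∈ Finset.range (d j), X ^ ℓ
    let e : ℕ → ℚ := fun i => (Polynomial.derivative^[i] Q).eval 1 / i.factorial
    e 0 ≠ 0 ∧
    e 3 = -e 2 + e 1 * e 2 / e 0 - e 1 / 6 + e 1 ^ 2 / (2 * e 0) - e 1 ^ 3 / (3 * e 0 ^ 2) := by
  intro Q e
  obtain ⟨h0, hT⟩ := TT_prod d hd Finset.univ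
  have hQ : (∏ j ∈ Finset.univ, ∑ ℓ ∈ Finset.range (d j), X ^ ℓ : Polynomial ℚ) = Q := rfl
  rw [hQ] at h0 hT
  have he : ∀ i, e i = aa i Q / i.factorial := fun i => rfl
  have he0 : e 0 = aa 0 Q := by rw [he]; simp
  have he1 : e 1 = aa 1 Q := by rw [he]; simp
  have he2 : e 2 = aa 2 Q / 2 := by rw [he]; norm_num
  have he3 : e 3 = aa 3 Q / 6 := by rw [he]; norm_num [Nat.factorial]
  refine ⟨by rw [he0]; exact h0, ?_⟩
  rw [he0, he1, he2, he3]
  rw [TT] at hT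
  field_simp at hT
  have hG' : 144 * (aa 0 Q) ^ 4 * aa 3 Q + 432 * (aa 0 Q) ^ 4 * aa 2 Q
      - 432 * (aa 0 Q) ^ 3 * aa 1 Q * aa 2 Q + 144 * (aa 0 Q) ^ 4 * aa 1 Q
      - 432 * (aa 0 Q) ^ 3 * (aa 1 Q) ^ 2 + 288 * (aa 0 Q) ^ 2 * (aa 1 Q) ^ 3 = 0 := by
    have h5 : (aa 0 Q) ^ 5 ≠ 0 := pow_ne_zero _ h0
    apply mul_left_cancel₀ h5
    rw [mul_zero]
    linear_combination (24 * (aa 0 Q) ^ 7) * hT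
  field_simp
  linear_combination hT
end

section
/- Let s ≥ 2 and let d_1, …, d_s be positive integers; let g(t) = σ_2(t^{d_1}, …, t^{d_s}) = ∑_{1≤i<j≤s} t^{d_i + d_j} ∈ ℚ[t]. Write σ_1, σ_2, σ_3 for the first three elementary symmetric functions of d_1,…,d_s. Then g(1) = s(s−1)/2, g′(1) = (s−1)σ_1, g″(1) = (s−1)(σ_1² − σ_1 − 2σ_2) + 2σ_2, and g‴(1) = (s−1)(σ_1³ − 3σ_1² + 2σ_1) − 3(s−2)σ_2(σ_1 − 2) + 3(s−4)σ_3. -/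
open Polynomial Finset

/-- First elementary symmetric function of `d_1, …, d_s`. -/
def esym1 {s : ℕ} (d : Fin s → ℕ) : ℕ := ∑ j, d j

/-- Second elementary symmetric function of `d_1, …, d_s`. -/
def esym2 {s : ℕ} (d : Fin s → ℕ) : ℕ :=
  ∑ p ∈ Finset.univ.filter (fun p : Fin s × Fin s => p.1 < p.2), d p.1 * d p.2

/-- Third elementary symmetric function of `d_1, …, d_s`. -/
def esym3 {s : ℕ} (d : Fin s → ℕ) : ℕ :=
  ∑ p ∈ Finset.univ.filter (fun p : Fin s × Fin s × Fin s => p.1 < p.2.1 ∧ p.2.1 < p.2.2),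
    d p.1 * d p.2.1 * d p.2.2

namespace TaylorEsymAux

variable {s : ℕ}

/-- Swapping the two summation variables in a strictly-lower-triangular double sum. -/
lemma sum_swap_lt (f : Fin s → Fin s → ℚ) :
    (∑ a, ∑ b, if a < b then f a b else 0) = ∑ a, ∑ b, if b < a then f b a else 0 :=
  Finset.sum_comm

/-- The basic "pair" identity: twice the sum over `a < b` of a symmetric function equals
the full double sum minus the diagonal. -/
lemma pair_split (f : Fin s → Fin s → ℚ) (hf : ∀ a b, f a b = f b a) :
    2 * (∑ a, ∑ b, if a < b then f a b else 0)
      = (∑ a, ∑ b, f a b) - ∑ a, f a a := by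
  have h1 : (∑ a, ∑ b, if a < b then f a b else 0)
      = ∑ a, ∑ b, if b < a then f a b else 0 := by
    rw [sum_swap_lt f]
    exact Finset.sum_congr rfl fun a _ => Finset.sum_congr rfl fun b _ => by
      by_cases h : b < a <;> simp [h, hf a b]
  have h2 : ∀ a b : Fin s, f a b
      = (if a < b then f a b else 0)
        + ((if b < a then f a b else 0) + (if a = b then f a b else 0)) := by
    intro a b
    rcases lt_trichotomy a b with h | h | h
    · simp [h, lt_asymm h, h.ne]
    · simp [h]
    · simp [h, lt_asymm h, h.ne']
  have h3 : (∑ a : Fin s, ∑ b, f a b)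
      = (∑ a, ∑ b, if a < b then f a b else 0)
        + ((∑ a, ∑ b, if b < a then f a b else 0)
          + (∑ a, ∑ b, if a = b then f a b else 0)) := by
    calc (∑ a : Fin s, ∑ b, f a b)
        = ∑ a : Fin s, ∑ b, ((if a < b then f a b else 0)
            + ((if b < a then f a b else 0) + (if a = b then f a b else 0))) :=
          Finset.sum_congr rfl fun a _ => Finset.sum_congr rfl fun b _ => h2 a b
      _ = _ := by simp [Finset.sum_add_distrib]
  have h4 : (∑ a : Fin s, ∑ b, if a = b then f a b else 0) = ∑ a, f a a :=
    Finset.sum_congr rfl fun a _ => by simp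
  rw [h3, ← h1, h4]; ring

lemma cycle3 (F : Fin s → Fin s → Fin s → ℚ) :
    (∑ a, ∑ b, ∑ c, F a b c) = ∑ c, ∑ a, ∑ b, F a b c := by
  calc (∑ a : Fin s, ∑ b, ∑ c, F a b c)
      = ∑ a : Fin s, ∑ c, ∑ b, F a b c :=
        Finset.sum_congr rfl fun a _ => Finset.sum_comm
    _ = ∑ c, ∑ a, ∑ b, F a b c := Finset.sum_comm

lemma swap23 (F : Fin s → Fin s → Fin s → ℚ) :
    (∑ a, ∑ b, ∑ c, F a b c) = ∑ a, ∑ c, ∑ b, F a b c :=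
  Finset.sum_congr rfl fun a _ => Finset.sum_comm

/-- Region `c < a < b` of distinct triples, reindexed to the sorted region. -/
lemma regionR1 (x : Fin s → ℚ) :
    (∑ a, ∑ b, ∑ c, if c < a ∧ a < b then x a * x b * x c else 0)
      = ∑ a, ∑ b, ∑ c, if a < b ∧ b < c then x a * x b * x c else 0 := by
  rw [cycle3]
  refine Finset.sum_congr rfl fun u _ => Finset.sum_congr rfl fun v _ =>
    Finset.sum_congr rfl fun w _ => ?_
  by_cases h : u < v ∧ v < w <;> simp [h] <;> ring

/-- Region `a < c < b` of distinct triples, reindexed to the sorted region. -/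
lemma regionR2 (x : Fin s → ℚ) :
    (∑ a, ∑ b, ∑ c, if a < c ∧ c < b then x a * x b * x c else 0)
      = ∑ a, ∑ b, ∑ c, if a < b ∧ b < c then x a * x b * x c else 0 := by
  rw [swap23]
  refine Finset.sum_congr rfl fun u _ => Finset.sum_congr rfl fun v _ =>
    Finset.sum_congr rfl fun w _ => ?_
  by_cases h : u < v ∧ v < w <;> simp [h] <;> ring

lemma key_if (x : Fin s → ℚ) (a b : Fin s) :
    (if a < b then x a * x b * ((∑ i, x i) - x a - x b) else 0)
      = ∑ c, ((if c < a ∧ a < b then x a * x b * x c else 0)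
          + ((if a < c ∧ c < b then x a * x b * x c else 0)
            + (if a < b ∧ b < c then x a * x b * x c else 0))) := by
  by_cases hab : a < b
  · have termwise : ∀ c : Fin s,
        ((if c < a ∧ a < b then x a * x b * x c else 0)
          + ((if a < c ∧ c < b then x a * x b * x c else 0)
            + (if a < b ∧ b < c then x a * x b * x c else 0)))
        = x a * x b * x c - (if c = a then x a * x b * x c else 0)
            - (if c = b then x a * x b * x c else 0) := by
      intro c
      simp only [Fin.lt_def, Fin.ext_iff] at hab ⊢
      split_ifs <;> first | ring1 | (exfalso; omega)
    rw [if_pos hab, Finset.sum_congr rfl fun c _ => termwise c]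
    rw [Finset.sum_sub_distrib, Finset.sum_sub_distrib, ← Finset.mul_sum,
      Finset.sum_ite_eq' univ a, Finset.sum_ite_eq' univ b]
    simp only [mem_univ, if_true]
    ring
  · rw [if_neg hab, eq_comm]
    apply Finset.sum_eq_zero
    intro c _
    have h1 : ¬(c < a ∧ a < b) := fun h => hab h.2
    have h2 : ¬(a < c ∧ c < b) := fun h => hab (h.1.trans h.2)
    have h3 : ¬(a < b ∧ b < c) := fun h => hab h.1
    simp [h1, h2, h3]

/-- Three times the sorted triple sum equals the pair sum with the complementary factor. -/
lemma triple_main (x : Fin s → ℚ) :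
    3 * (∑ a, ∑ b, ∑ c, if a < b ∧ b < c then x a * x b * x c else 0)
      = ∑ a, ∑ b, if a < b then x a * x b * ((∑ i, x i) - x a - x b) else 0 := by
  have h : (∑ a, ∑ b, if a < b then x a * x b * ((∑ i, x i) - x a - x b) else 0)
      = (∑ a, ∑ b, ∑ c, if c < a ∧ a < b then x a * x b * x c else 0)
        + ((∑ a, ∑ b, ∑ c, if a < c ∧ c < b then x a * x b * x c else 0)
          + (∑ a, ∑ b, ∑ c, if a < b ∧ b < c then x a * x b * x c else 0)) := by
    calc (∑ a, ∑ b, if a < b then x a * x b * ((∑ i, x i) - x a - x b) else 0)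
        = ∑ a, ∑ b, ∑ c, ((if c < a ∧ a < b then x a * x b * x c else 0)
            + ((if a < c ∧ c < b then x a * x b * x c else 0)
              + (if a < b ∧ b < c then x a * x b * x c else 0))) :=
          Finset.sum_congr rfl fun a _ => Finset.sum_congr rfl fun b _ => key_if x a b
      _ = _ := by simp [Finset.sum_add_distrib]
  rw [h, regionR1, regionR2]; ring

end TaylorEsymAux

open TaylorEsymAux in
/-- The Taylor expansion of `g(t) = σ₂(t^{d_1},…,t^{d_s}) = ∑_{i<j} t^{d_i+d_j}` at `t = 1`
(Section 2.3): `g(1) = s(s−1)/2`, `g′(1) = (s−1)σ₁`,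
`g″(1) = (s−1)(σ₁² − σ₁ − 2σ₂) + 2σ₂`, and
`g‴(1) = (s−1)(σ₁³ − 3σ₁² + 2σ₁) − 3(s−2)σ₂(σ₁ − 2) + 3(s−4)σ₃`. -/
theorem taylor_coeffs_esym2_powers (s : ℕ) (hs : 2 ≤ s) (d : Fin s → ℕ) (hd : ∀ j, 0 < d j) :
    let g : Polynomial ℚ :=
      ∑ p ∈ Finset.univ.filter (fun p : Fin s × Fin s => p.1 < p.2), X ^ (d p.1 + d p.2)
    let σ₁ : ℚ := (esym1 d : ℚ)
    let σ₂ : ℚ := (esym2 d : ℚ)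
    let σ₃ : ℚ := (esym3 d : ℚ)
    g.eval 1 = (s : ℚ) * ((s : ℚ) - 1) / 2 ∧
    (Polynomial.derivative g).eval 1 = ((s : ℚ) - 1) * σ₁ ∧
    (Polynomial.derivative^[2] g).eval 1 = ((s : ℚ) - 1) * (σ₁ ^ 2 - σ₁ - 2 * σ₂) + 2 * σ₂ ∧
    (Polynomial.derivative^[3] g).eval 1
      = ((s : ℚ) - 1) * (σ₁ ^ 3 - 3 * σ₁ ^ 2 + 2 * σ₁)
        - 3 * ((s : ℚ) - 2) * σ₂ * (σ₁ - 2) + 3 * ((s : ℚ) - 4) * σ₃ := by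
  intro g σ₁ σ₂ σ₃
  set x : Fin s → ℚ := fun i => (d i : ℚ) with hxdef
  set S1 : ℚ := ∑ i, x i with hS1
  set S2 : ℚ := ∑ i, x i ^ 2 with hS2
  set S3 : ℚ := ∑ i, x i ^ 3 with hS3
  -- conversion of pair filter sums to nested if-sums
  have hconv : ∀ f : Fin s → Fin s → ℚ,
      (∑ p ∈ Finset.univ.filter (fun p : Fin s × Fin s => p.1 < p.2), f p.1 p.2)
        = ∑ a, ∑ b, if a < b then f a b else 0 := by
    intro f
    rw [Finset.sum_filter, Fintype.sum_prod_type]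
  -- the iterated derivatives, evaluated at 1
  have hgsum : ∀ k : ℕ, (Polynomial.derivative^[k] g)
      = ∑ p ∈ Finset.univ.filter (fun p : Fin s × Fin s => p.1 < p.2),
          Polynomial.derivative^[k] (X ^ (d p.1 + d p.2) : ℚ[X]) := by
    intro k
    induction k with
    | zero => rfl
    | succ k ih =>
        rw [Function.iterate_succ_apply', ih, derivative_sum]
        exact Finset.sum_congr rfl fun p _ => (Function.iterate_succ_apply' _ _ _).symm
  have heval : ∀ k : ℕ, (Polynomial.derivative^[k] g).eval 1
      = ∑ a, ∑ b, if a < b then (((d a + d b).descFactorial k : ℕ) : ℚ) else 0 := by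
    intro k
    rw [hgsum k, eval_finset_sum, ← hconv fun a b => (((d a + d b).descFactorial k : ℕ) : ℚ)]
    refine Finset.sum_congr rfl fun p _ => ?_
    rw [Polynomial.iterate_derivative_X_pow_eq_smul]
    simp
  -- basic bounds
  have hn2 : ∀ a b : Fin s, 2 ≤ d a + d b := fun a b => by
    have := hd a; have := hd b; omega
  -- descFactorial casts
  have hdf2 : ∀ n : ℕ, 2 ≤ n → ((n.descFactorial 2 : ℕ) : ℚ) = (n : ℚ) ^ 2 - (n : ℚ) := by
    intro n hn
    obtain ⟨m, rfl⟩ : ∃ m, n = m + 2 := ⟨n - 2, by omega⟩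
    simp [Nat.descFactorial]; push_cast; ring
  have hdf3 : ∀ n : ℕ, 2 ≤ n →
      ((n.descFactorial 3 : ℕ) : ℚ) = (n : ℚ) ^ 3 - 3 * (n : ℚ) ^ 2 + 2 * (n : ℚ) := by
    intro n hn
    obtain ⟨m, rfl⟩ : ∃ m, n = m + 2 := ⟨n - 2, by omega⟩
    simp [Nat.descFactorial]; push_cast; ring
  -- the four canonical pair sums
  set A0 : ℚ := ∑ a : Fin s, ∑ b : Fin s, if a < b then (1 : ℚ) else 0 with hA0def
  set A1 : ℚ := ∑ a : Fin s, ∑ b : Fin s, if a < b then x a + x b else 0 with hA1def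
  set A2 : ℚ := ∑ a : Fin s, ∑ b : Fin s, if a < b then (x a + x b) ^ 2 else 0 with hA2def
  set A3 : ℚ := ∑ a : Fin s, ∑ b : Fin s, if a < b then (x a + x b) ^ 3 else 0 with hA3def
  -- evaluate the four pair sums via pair_split
  have card_eval : ∀ c : ℚ, (∑ _a : Fin s, c) = (s : ℚ) * c := by
    intro c; rw [Finset.sum_const, card_univ, Fintype.card_fin, nsmul_eq_mul]
  have hp0 : 2 * A0 = (s : ℚ) * (s : ℚ) - (s : ℚ) := by
    rw [hA0def, pair_split (fun _ _ => (1 : ℚ)) (fun _ _ => rfl)]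
    rw [Finset.sum_congr rfl fun a (_ : a ∈ univ) => card_eval 1, card_eval ((s : ℚ) * 1),
      card_eval 1]
    ring
  have hp1 : 2 * A1 = 2 * (s : ℚ) * S1 - 2 * S1 := by
    rw [hA1def, pair_split (fun a b => x a + x b) (fun a b => by ring)]
    have htot : (∑ a : Fin s, ∑ b, (x a + x b)) = 2 * (s : ℚ) * S1 := by
      calc (∑ a : Fin s, ∑ b, (x a + x b))
          = ∑ a : Fin s, ((s : ℚ) * x a + S1) := Finset.sum_congr rfl fun a _ => by
            rw [Finset.sum_add_distrib, card_eval (x a), hS1]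
        _ = (s : ℚ) * S1 + (s : ℚ) * S1 := by
            rw [Finset.sum_add_distrib, ← Finset.mul_sum, card_eval S1, ← hS1]
        _ = 2 * (s : ℚ) * S1 := by ring
    have hdiag : (∑ a : Fin s, (x a + x a)) = 2 * S1 := by
      rw [show (∑ a : Fin s, (x a + x a)) = ∑ a : Fin s, 2 * x a from
        Finset.sum_congr rfl fun a _ => by ring, ← Finset.mul_sum, ← hS1]
    rw [htot, hdiag]
  have hp2 : 2 * A2 = (2 * (s : ℚ) * S2 + 2 * S1 ^ 2) - 4 * S2 := by
    rw [hA2def, pair_split (fun a b => (x a + x b) ^ 2) (fun a b => by ring)]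
    have htot : (∑ a : Fin s, ∑ b, (x a + x b) ^ 2) = 2 * (s : ℚ) * S2 + 2 * S1 ^ 2 := by
      calc (∑ a : Fin s, ∑ b, (x a + x b) ^ 2)
          = ∑ a : Fin s, ((s : ℚ) * x a ^ 2 + (2 * x a * S1 + S2)) :=
            Finset.sum_congr rfl fun a _ => by
              calc (∑ b, (x a + x b) ^ 2)
                  = ∑ b, (x a ^ 2 + (2 * x a * x b + x b ^ 2)) :=
                    Finset.sum_congr rfl fun b _ => by ring
                _ = _ := by
                    rw [Finset.sum_add_distrib, Finset.sum_add_distrib, card_eval (x a ^ 2),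
                      ← Finset.mul_sum, ← hS1, ← hS2]
        _ = (s : ℚ) * S2 + (2 * S1 * S1 + (s : ℚ) * S2) := by
            rw [Finset.sum_add_distrib, Finset.sum_add_distrib, ← Finset.mul_sum, ← hS2,
              card_eval S2]
            congr 2
            calc (∑ a : Fin s, 2 * x a * S1) = ∑ a : Fin s, (2 * S1) * x a :=
                Finset.sum_congr rfl fun a _ => by ring
              _ = 2 * S1 * S1 := by rw [← Finset.mul_sum, ← hS1]
        _ = _ := by ring
    have hdiag : (∑ a : Fin s, (x a + x a) ^ 2) = 4 * S2 := by
      rw [show (∑ a : Fin s, (x a + x a) ^ 2) = ∑ a : Fin s, 4 * x a ^ 2 from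
        Finset.sum_congr rfl fun a _ => by ring, ← Finset.mul_sum, ← hS2]
    rw [htot, hdiag]
  have hp3 : 2 * A3 = (2 * (s : ℚ) * S3 + 6 * S1 * S2) - 8 * S3 := by
    rw [hA3def, pair_split (fun a b => (x a + x b) ^ 3) (fun a b => by ring)]
    have htot : (∑ a : Fin s, ∑ b, (x a + x b) ^ 3) = 2 * (s : ℚ) * S3 + 6 * S1 * S2 := by
      calc (∑ a : Fin s, ∑ b, (x a + x b) ^ 3)
          = ∑ a : Fin s, ((s : ℚ) * x a ^ 3 + (3 * x a ^ 2 * S1 + (3 * x a * S2 + S3))) :=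
            Finset.sum_congr rfl fun a _ => by
              calc (∑ b, (x a + x b) ^ 3)
                  = ∑ b, (x a ^ 3 + (3 * x a ^ 2 * x b + (3 * x a * x b ^ 2 + x b ^ 3))) :=
                    Finset.sum_congr rfl fun b _ => by ring
                _ = _ := by
                    rw [Finset.sum_add_distrib, Finset.sum_add_distrib, Finset.sum_add_distrib,
                      card_eval (x a ^ 3), ← Finset.mul_sum, ← Finset.mul_sum, ← hS1, ← hS2, ← hS3]
        _ = (s : ℚ) * S3 + (3 * S1 * S2 + (3 * S1 * S2 + (s : ℚ) * S3)) := by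
            rw [Finset.sum_add_distrib, Finset.sum_add_distrib, Finset.sum_add_distrib,
              ← Finset.mul_sum, ← hS3, card_eval S3]
            congr 2
            · calc (∑ a : Fin s, 3 * x a ^ 2 * S1) = ∑ a : Fin s, (3 * S1) * x a ^ 2 :=
                  Finset.sum_congr rfl fun a _ => by ring
                _ = 3 * S1 * S2 := by rw [← Finset.mul_sum, ← hS2]
            congr 1
            calc (∑ a : Fin s, 3 * x a * S2) = ∑ a : Fin s, (3 * S2) * x a :=
                Finset.sum_congr rfl fun a _ => by ring
              _ = 3 * S1 * S2 := by rw [← Finset.mul_sum, ← hS1]; ring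
        _ = _ := by ring
    have hdiag : (∑ a : Fin s, (x a + x a) ^ 3) = 8 * S3 := by
      rw [show (∑ a : Fin s, (x a + x a) ^ 3) = ∑ a : Fin s, 8 * x a ^ 3 from
        Finset.sum_congr rfl fun a _ => by ring, ← Finset.mul_sum, ← hS3]
    rw [htot, hdiag]
  -- the elementary symmetric functions in terms of power sums
  have hσ1 : σ₁ = S1 := by
    show ((esym1 d : ℕ) : ℚ) = S1
    rw [esym1, hS1, Nat.cast_sum]
  have hq2 : σ₂ = (S1 ^ 2 - S2) / 2 := by
    have hcast : σ₂ = ∑ a, ∑ b, if a < b then x a * x b else 0 := by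
      show ((esym2 d : ℕ) : ℚ) = _
      rw [esym2, Nat.cast_sum, ← hconv fun a b => x a * x b]
      exact Finset.sum_congr rfl fun p _ => by push_cast; rfl
    have h := pair_split (fun a b => x a * x b) (fun a b => by ring)
    have htot : (∑ a : Fin s, ∑ b, x a * x b) = S1 * S1 := by
      rw [← Finset.sum_mul_sum, ← hS1]
    have hdiag : (∑ a : Fin s, x a * x a) = S2 := by
      rw [show (∑ a : Fin s, x a * x a) = ∑ a : Fin s, x a ^ 2 from
        Finset.sum_congr rfl fun a _ => by ring, ← hS2]
    rw [htot, hdiag, ← hcast] at h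
    linarith
  have hq3 : σ₃ = (S1 ^ 3 - 3 * S1 * S2 + 2 * S3) / 6 := by
    have hcast : σ₃ = ∑ a, ∑ b, ∑ c, if a < b ∧ b < c then x a * x b * x c else 0 := by
      show ((esym3 d : ℕ) : ℚ) = _
      rw [esym3, Nat.cast_sum, Finset.sum_filter, Fintype.sum_prod_type]
      refine Finset.sum_congr rfl fun a _ => ?_
      rw [Fintype.sum_prod_type]
      refine Finset.sum_congr rfl fun b _ => Finset.sum_congr rfl fun c _ => ?_
      by_cases h : a < b ∧ b < c <;> simp [h] <;> rfl
    have h3T := triple_main x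
    have h := pair_split (fun a b => x a * x b * (S1 - x a - x b)) (fun a b => by ring)
    have htot : (∑ a : Fin s, ∑ b, x a * x b * (S1 - x a - x b))
        = S1 ^ 3 - 2 * (S1 * S2) := by
      calc (∑ a : Fin s, ∑ b, x a * x b * (S1 - x a - x b))
          = ∑ a : Fin s, ((x a * (S1 - x a)) * S1 - x a * S2) :=
            Finset.sum_congr rfl fun a _ => by
              calc (∑ b, x a * x b * (S1 - x a - x b))
                  = ∑ b, ((x a * (S1 - x a)) * x b - x a * x b ^ 2) :=
                    Finset.sum_congr rfl fun b _ => by ring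
                _ = _ := by
                    rw [Finset.sum_sub_distrib, ← Finset.mul_sum, ← Finset.mul_sum, ← hS1, ← hS2]
        _ = ∑ a : Fin s, ((S1 * S1 - S2) * x a - S1 * x a ^ 2) :=
            Finset.sum_congr rfl fun a _ => by ring
        _ = (S1 * S1 - S2) * S1 - S1 * S2 := by
            rw [Finset.sum_sub_distrib, ← Finset.mul_sum, ← Finset.mul_sum, ← hS1, ← hS2]
        _ = _ := by ring
    have hdiag : (∑ a : Fin s, x a * x a * (S1 - x a - x a)) = S1 * S2 - 2 * S3 := by
      calc (∑ a : Fin s, x a * x a * (S1 - x a - x a))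
          = ∑ a : Fin s, (S1 * x a ^ 2 - 2 * x a ^ 3) :=
            Finset.sum_congr rfl fun a _ => by ring
        _ = S1 * S2 - 2 * S3 := by
            rw [Finset.sum_sub_distrib, ← Finset.mul_sum, ← Finset.mul_sum, ← hS2, ← hS3]
    rw [htot, hdiag] at h
    rw [hcast]
    linarith
  -- identify the evaluated derivatives with the canonical pair sums
  have hd0 : g.eval 1 = A0 := by
    have h := heval 0
    rw [Function.iterate_zero_apply] at h
    rw [h, hA0def]
    exact Finset.sum_congr rfl fun a _ => Finset.sum_congr rfl fun b _ => by
      by_cases hab : a < b <;> simp [hab]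
  have hd1 : (Polynomial.derivative g).eval 1 = A1 := by
    have h := heval 1
    rw [Function.iterate_one] at h
    rw [h, hA1def]
    exact Finset.sum_congr rfl fun a _ => Finset.sum_congr rfl fun b _ => by
      by_cases hab : a < b <;> simp [hab, hxdef]
  have hd2 : (Polynomial.derivative^[2] g).eval 1 = A2 - A1 := by
    rw [heval 2, hA2def, hA1def, ← Finset.sum_sub_distrib]
    refine Finset.sum_congr rfl fun a _ => ?_
    rw [← Finset.sum_sub_distrib]
    refine Finset.sum_congr rfl fun b _ => ?_
    by_cases hab : a < b
    · rw [if_pos hab, if_pos hab, if_pos hab, hdf2 _ (hn2 a b)]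
      push_cast [hxdef]; ring
    · simp [hab]
  have hd3 : (Polynomial.derivative^[3] g).eval 1 = A3 - 3 * A2 + 2 * A1 := by
    have hsplit : (Polynomial.derivative^[3] g).eval 1
        = ∑ a, ∑ b, ((if a < b then (x a + x b) ^ 3 else 0)
            - 3 * (if a < b then (x a + x b) ^ 2 else 0)
            + 2 * (if a < b then x a + x b else 0)) := by
      rw [heval 3]
      refine Finset.sum_congr rfl fun a _ => Finset.sum_congr rfl fun b _ => ?_
      by_cases hab : a < b
      · rw [if_pos hab, if_pos hab, if_pos hab, if_pos hab, hdf3 _ (hn2 a b)]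
        push_cast [hxdef]; ring
      · simp [hab]
    rw [hsplit, hA3def, hA2def, hA1def]
    simp only [Finset.sum_add_distrib, Finset.sum_sub_distrib, ← Finset.mul_sum]
  refine ⟨?_, ?_, ?_, ?_⟩
  · rw [hd0]; linear_combination hp0 / 2
  · rw [hd1, hσ1]; linear_combination hp1 / 2
  · rw [hd2, hσ1, hq2]; linear_combination hp2 / 2 - hp1 / 2
  · rw [hd3, hσ1, hq2, hq3]; linear_combination hp3 / 2 - 3 * (hp2 / 2) + hp1
end
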